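/- Every 3×3 quaternionic matrix z that is Hermitian (equal to its quaternionic conjugate transpose) can be diagonalized with real diagonal entries by an element of the subgroup of the quaternionic unitary group generated by the matrices T_h = diag(h,1,1) (for h a quaternion of norm 1) together with the real special orthogonal matrices SO₃(ℝ): there exists u in this subgroup such that u z u* is a diagonal matrix all of whose entries are real. -/

import Mathlib

open Matrix

noncomputable section

/-- For a quaternion `h`, the diagonal matrix `T_h = diag(h,1,1)`. -/
def Th (h : Quaternion ℝ) : Matrix (Fin 3) (Fin 3) (Quaternion ℝ) :=
  Matrix.diagonal ![h, 1, 1]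

/-- The generating set: the `T_h` for `h` a unit quaternion, together with the
real special orthogonal matrices `SO₃(ℝ)`, viewed as invertible quaternionic
matrices. -/
def genSet : Set (Matrix (Fin 3) (Fin 3) (Quaternion ℝ))ˣ :=
  {u | (∃ h : Quaternion ℝ, ‖h‖ = 1 ∧ u.val = Th h) ∨
       (∃ x : Matrix (Fin 3) (Fin 3) ℝ, x * xᵀ = 1 ∧ x.det = 1 ∧
         u.val = x.map (algebraMap ℝ (Quaternion ℝ)))}

namespace QH3

local notation "ℍ" => Quaternion ℝ

abbrev M3 := Matrix (Fin 3) (Fin 3) (Quaternion ℝ)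

lemma algMap_eq (r : ℝ) : algebraMap ℝ (Quaternion ℝ) r = (r : ℍ) := rfl

lemma mul_star_self_of_norm_one {h : ℍ} (hh : ‖h‖ = 1) : h * star h = 1 := by
  rw [Quaternion.self_mul_star, Quaternion.normSq_eq_norm_mul_self, hh]
  norm_num

lemma star_mul_self_of_norm_one {h : ℍ} (hh : ‖h‖ = 1) : star h * h = 1 := by
  rw [Quaternion.star_mul_self, Quaternion.normSq_eq_norm_mul_self, hh]
  norm_num

/-- values of elements of the closure -/
def clSet : Set M3 := {A | ∃ u ∈ Subgroup.closure genSet, u.val = A}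

lemma clSet.mul {A B : M3} (hA : A ∈ clSet) (hB : B ∈ clSet) : A * B ∈ clSet := by
  obtain ⟨u, hu, rfl⟩ := hA
  obtain ⟨v, hv, rfl⟩ := hB
  exact ⟨u * v, Subgroup.mul_mem _ hu hv, rfl⟩

lemma vec_mul_aux (a b : ℍ) : ![a, 1, 1] * ![b, 1, 1] = ![a * b, 1, 1] := by
  funext i; fin_cases i <;> simp

lemma Th_mul (a b : ℍ) : Th a * Th b = Th (a * b) := by
  rw [Th, Th, Th, Matrix.diagonal_mul_diagonal]
  have : (fun i => ![a,1,1] i * ![b,1,1] i) = ![a * b, 1, 1] := by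
    funext i; fin_cases i <;> simp
  rw [this]

lemma Th_conjTranspose (a : ℍ) : (Th a)ᴴ = Th (star a) := by
  rw [Th, Th, Matrix.diagonal_conjTranspose]
  have : (star ![a,1,1] : Fin 3 → ℍ) = ![star a, 1, 1] := by
    funext i; fin_cases i <;> simp [Pi.star_apply]
  rw [this]

lemma Th_one : Th 1 = 1 := by
  rw [Th]
  have : (![1, 1, 1] : Fin 3 → ℍ) = fun _ => 1 := by funext i; fin_cases i <;> rfl
  rw [this, Matrix.diagonal_one]

/-- `Th h` as a unit, for `h` of norm 1. -/
def uTh (h : ℍ) (hh : ‖h‖ = 1) : M3ˣ :=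
  ⟨Th h, Th (star h),
    by rw [Th_mul, mul_star_self_of_norm_one hh, Th_one],
    by rw [Th_mul, star_mul_self_of_norm_one hh, Th_one]⟩

lemma mem_Th {h : ℍ} (hh : ‖h‖ = 1) : Th h ∈ clSet :=
  ⟨uTh h hh, Subgroup.subset_closure (Or.inl ⟨h, hh, rfl⟩), rfl⟩

/-- orthogonal matrix with det 1 as a unit -/
def uSO (x : Matrix (Fin 3) (Fin 3) ℝ) (h1 : x * xᵀ = 1) : M3ˣ :=
  ⟨x.map (algebraMap ℝ (Quaternion ℝ)), xᵀ.map (algebraMap ℝ (Quaternion ℝ)),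
    by rw [← Matrix.map_mul, h1, Matrix.map_one _ (map_zero _) (map_one _)],
    by rw [← Matrix.map_mul, mul_eq_one_comm.mp h1,
      Matrix.map_one _ (map_zero _) (map_one _)]⟩

lemma mem_SO {x : Matrix (Fin 3) (Fin 3) ℝ} (h1 : x * xᵀ = 1) (h2 : x.det = 1) :
    x.map (algebraMap ℝ (Quaternion ℝ)) ∈ clSet :=
  ⟨uSO x h1, Subgroup.subset_closure (Or.inr ⟨x, h1, h2, rfl⟩), rfl⟩

/-- every element of the closure is unitary -/
lemma isUnitary_of_mem {u : M3ˣ} (hu : u ∈ Subgroup.closure genSet) :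
    u.val * (u.val)ᴴ = 1 ∧ (u.val)ᴴ * u.val = 1 := by
  induction hu using Subgroup.closure_induction with
  | mem x hx =>
    rcases hx with ⟨h, hh, hx⟩ | ⟨y, hy1, _, hx⟩
    · rw [hx, Th_conjTranspose, Th_mul, Th_mul, mul_star_self_of_norm_one hh,
        star_mul_self_of_norm_one hh, Th_one]
      exact ⟨rfl, rfl⟩
    · have hy1' : yᵀ * y = 1 := mul_eq_one_comm.mp hy1
      have hmap : (y.map (algebraMap ℝ (Quaternion ℝ)))ᴴ = yᵀ.map (algebraMap ℝ (Quaternion ℝ)) := by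
        rw [← Matrix.conjTranspose_map _ (fun a => by simp [algMap_eq, Quaternion.star_coe]),
          Matrix.conjTranspose_eq_transpose_of_trivial]
      rw [hx, hmap, ← Matrix.map_mul, ← Matrix.map_mul, hy1, hy1',
        Matrix.map_one _ (map_zero _) (map_one _)]
      exact ⟨rfl, rfl⟩
  | one => simp
  | mul x y hx hy ihx ihy =>
    constructor
    · calc (x.val * y.val) * (x.val * y.val)ᴴ
          = x.val * (y.val * (y.val)ᴴ) * (x.val)ᴴ := by
            rw [Matrix.conjTranspose_mul]; simp [mul_assoc]
        _ = 1 := by rw [ihy.1, mul_one, ihx.1]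
    · calc (x.val * y.val)ᴴ * (x.val * y.val)
          = (y.val)ᴴ * ((x.val)ᴴ * x.val) * y.val := by
            rw [Matrix.conjTranspose_mul]; simp [mul_assoc]
        _ = 1 := by rw [ihx.2, mul_one, ihy.2]
  | inv x hx ih =>
    have hinv : (x⁻¹).val = (x.val)ᴴ := Units.inv_eq_of_mul_eq_one_right ih.1
    rw [hinv, Matrix.conjTranspose_conjTranspose]
    exact ⟨ih.2, ih.1⟩

/-! ### Real orthogonal building blocks -/

lemma tr3 {α : Type*} (a b c d e f g h i : α) :
    (!![a,b,c; d,e,f; g,h,i])ᵀ = !![a,d,g; b,e,h; c,f,i] := by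
  refine Matrix.ext fun p q => ?_
  fin_cases p <;> fin_cases q <;> rfl

lemma diag3 {α : Type*} [Zero α] (a b c : α) :
    Matrix.diagonal ![a,b,c] = !![a,0,0; 0,b,0; 0,0,c] := by
  refine Matrix.ext fun p q => ?_
  fin_cases p <;> fin_cases q <;> simp [Matrix.diagonal] <;> rfl

lemma map3 {α β : Type*} (f : α → β) (a b c d e g h i j : α) :
    (!![a,b,c; d,e,g; h,i,j]).map f = !![f a, f b, f c; f d, f e, f g; f h, f i, f j] := by
  refine Matrix.ext fun p q => ?_
  fin_cases p <;> fin_cases q <;> rfl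

def rot12 (c s : ℝ) : Matrix (Fin 3) (Fin 3) ℝ := !![1,0,0; 0,c,s; 0,-s,c]

def rot01 (c s : ℝ) : Matrix (Fin 3) (Fin 3) ℝ := !![c,s,0; -s,c,0; 0,0,1]

def cyc : Matrix (Fin 3) (Fin 3) ℝ := !![0,1,0; 0,0,1; 1,0,0]

lemma rot12_orth {c s : ℝ} (h : c^2 + s^2 = 1) : rot12 c s * (rot12 c s)ᵀ = 1 := by
  rw [rot12, tr3, Matrix.mul_fin_three, Matrix.one_fin_three]
  refine Matrix.ext fun p q => ?_
  fin_cases p <;> fin_cases q <;> (simp [Matrix.vecHead, Matrix.vecTail]; try nlinarith [h])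

lemma rot12_det {c s : ℝ} (h : c^2 + s^2 = 1) : (rot12 c s).det = 1 := by
  rw [rot12, Matrix.det_fin_three]; simp; nlinarith [h]

lemma rot01_orth {c s : ℝ} (h : c^2 + s^2 = 1) : rot01 c s * (rot01 c s)ᵀ = 1 := by
  rw [rot01, tr3, Matrix.mul_fin_three, Matrix.one_fin_three]
  refine Matrix.ext fun p q => ?_
  fin_cases p <;> fin_cases q <;> (simp [Matrix.vecHead, Matrix.vecTail]; try nlinarith [h])

lemma rot01_det {c s : ℝ} (h : c^2 + s^2 = 1) : (rot01 c s).det = 1 := by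
  rw [rot01, Matrix.det_fin_three]; simp; nlinarith [h]

lemma cyc_orth : cyc * cycᵀ = 1 := by
  rw [cyc, tr3, Matrix.mul_fin_three, Matrix.one_fin_three]
  norm_num

lemma cyc_det : cyc.det = 1 := by
  rw [cyc, Matrix.det_fin_three]; norm_num [Matrix.vecHead, Matrix.vecTail]; simp [Matrix.cons_val]

lemma mem_rot12 {c s : ℝ} (h : c^2 + s^2 = 1) :
    (rot12 c s).map (algebraMap ℝ (Quaternion ℝ)) ∈ clSet :=
  mem_SO (rot12_orth h) (rot12_det h)

lemma mem_rot01 {c s : ℝ} (h : c^2 + s^2 = 1) :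
    (rot01 c s).map (algebraMap ℝ (Quaternion ℝ)) ∈ clSet :=
  mem_SO (rot01_orth h) (rot01_det h)

lemma mem_cyc : cyc.map (algebraMap ℝ (Quaternion ℝ)) ∈ clSet :=
  mem_SO cyc_orth cyc_det

lemma Th_eq (h : ℍ) : Th h = !![h,0,0; 0,1,0; 0,0,1] := by
  rw [Th, diag3]

lemma cycm_eq : cyc.map (algebraMap ℝ (Quaternion ℝ)) = !![0,1,0; 0,0,1; 1,0,0] := by
  rw [cyc, map3]; norm_num

/-- diagonal matrices of unit quaternions are in the subgroup -/
lemma mem_diag {h₀ h₁ h₂ : ℍ} (e0 : ‖h₀‖ = 1) (e1 : ‖h₁‖ = 1) (e2 : ‖h₂‖ = 1) :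
    Matrix.diagonal ![h₀, h₁, h₂] ∈ clSet := by
  have key : Matrix.diagonal ![h₀, h₁, h₂] =
      Th h₀ * cyc.map (algebraMap ℝ (Quaternion ℝ)) * Th h₂ *
        cyc.map (algebraMap ℝ (Quaternion ℝ)) * Th h₁ *
        cyc.map (algebraMap ℝ (Quaternion ℝ)) := by
    rw [diag3, Th_eq, Th_eq, Th_eq, cycm_eq, Matrix.mul_fin_three, Matrix.mul_fin_three,
      Matrix.mul_fin_three, Matrix.mul_fin_three, Matrix.mul_fin_three]
    norm_num
  rw [key]
  exact clSet.mul (clSet.mul (clSet.mul (clSet.mul (clSet.mul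
    (mem_Th e0) mem_cyc) (mem_Th e2)) mem_cyc) (mem_Th e1)) mem_cyc

/-! ### Transitivity on the unit sphere -/

lemma map_mulVec (x : Matrix (Fin 3) (Fin 3) ℝ) (g : Fin 3 → ℝ) :
    (x.map (algebraMap ℝ (Quaternion ℝ))) *ᵥ (fun i => ((g i : ℝ) : ℍ)) =
      fun i => (((x *ᵥ g) i : ℝ) : ℍ) := by
  funext i
  simp [Matrix.mulVec, dotProduct, Fin.sum_univ_three, algMap_eq,
    ← Quaternion.coe_mul, ← Quaternion.coe_add]

open Classical in
/-- the unit quaternion rotating `q` to a nonnegative real -/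
def phase (q : ℍ) : ℍ := if q = 0 then 1 else (‖q‖ : ℍ)⁻¹ * star q

lemma norm_phase (q : ℍ) : ‖phase q‖ = 1 := by
  rw [phase]
  split_ifs with hq
  · simp
  · have h1 : ‖q‖ ≠ 0 := norm_ne_zero_iff.mpr hq
    rw [norm_mul, norm_inv, Quaternion.norm_coe, norm_star]
    simp [Real.norm_eq_abs, abs_of_nonneg (norm_nonneg q), inv_mul_cancel₀ h1]

lemma phase_mul (q : ℍ) : phase q * q = ((‖q‖ : ℝ) : ℍ) := by
  rw [phase]
  split_ifs with hq
  · simp [hq]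
  · have h1 : (‖q‖ : ℝ) ≠ 0 := norm_ne_zero_iff.mpr hq
    rw [mul_assoc, Quaternion.star_mul_self, Quaternion.normSq_eq_norm_mul_self]
    rw [← Quaternion.coe_inv, ← Quaternion.coe_mul]
    congr 1
    field_simp

/-- Any unit vector in `ℍ³` can be moved to `e₀` by an element of the subgroup. -/
lemma exists_mapsTo_e0 (v : Fin 3 → ℍ)
    (hv : ‖v 0‖^2 + ‖v 1‖^2 + ‖v 2‖^2 = 1) :
    ∃ A ∈ clSet, A *ᵥ v = fun i => if i = 0 then 1 else 0 := by
  set r : Fin 3 → ℝ := fun i => ‖v i‖ with hr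
  have hD : Matrix.diagonal ![phase (v 0), phase (v 1), phase (v 2)] ∈ clSet :=
    mem_diag (norm_phase _) (norm_phase _) (norm_phase _)
  have hDv : (Matrix.diagonal ![phase (v 0), phase (v 1), phase (v 2)]) *ᵥ v =
      fun i => ((r i : ℝ) : ℍ) := by
    funext i
    rw [Matrix.mulVec_diagonal]
    fin_cases i <;> simpa using phase_mul _
  set t : ℝ := Real.sqrt (r 1^2 + r 2^2) with ht
  have ht2 : t^2 = r 1^2 + r 2^2 := Real.sq_sqrt (by positivity)
  set c : ℝ := if t = 0 then 1 else r 1 / t with hc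
  set s : ℝ := if t = 0 then 0 else r 2 / t with hs
  have hcs : c^2 + s^2 = 1 := by
    rw [hc, hs]; split_ifs with h0
    · norm_num
    · field_simp; nlinarith [ht2]
  have hr0 : r 0^2 + t^2 = 1 := by
    rw [ht2]; simp only [hr]; linarith [hv]
  have hzero : t = 0 → r 1 = 0 ∧ r 2 = 0 := by
    intro h0
    constructor <;> nlinarith [ht2, sq_nonneg (r 1), sq_nonneg (r 2)]
  have e1 : c * r 1 + s * r 2 = t := by
    rw [hc, hs]; split_ifs with h0
    · rw [(hzero h0).1, (hzero h0).2, h0]; ring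
    · field_simp; nlinarith [ht2]
  have e2 : -s * r 1 + c * r 2 = 0 := by
    rw [hc, hs]; split_ifs with h0
    · rw [(hzero h0).2]; ring
    · field_simp; ring
  have hR1 : rot12 c s *ᵥ r = ![r 0, t, 0] := by
    funext i
    fin_cases i <;>
      simp [rot12, Matrix.mulVec, dotProduct, Fin.sum_univ_three,
        Matrix.vecHead, Matrix.vecTail] <;> linarith [e1, e2]
  have hR2 : rot01 (r 0) t *ᵥ ![r 0, t, 0] = ![1, 0, 0] := by
    have e3 : r 0 * r 0 + t * t = 1 := by nlinarith [hr0]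
    funext i
    fin_cases i <;>
      simp [rot01, Matrix.mulVec, dotProduct, Fin.sum_univ_three,
        Matrix.vecHead, Matrix.vecTail] <;> linarith [e3]
  refine ⟨(rot01 (r 0) t).map (algebraMap ℝ (Quaternion ℝ)) *
      ((rot12 c s).map (algebraMap ℝ (Quaternion ℝ)) *
        Matrix.diagonal ![phase (v 0), phase (v 1), phase (v 2)]),
    clSet.mul (mem_rot01 hr0) (clSet.mul (mem_rot12 hcs) hD), ?_⟩
  rw [← Matrix.mulVec_mulVec, ← Matrix.mulVec_mulVec, hDv, map_mulVec, hR1,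
    map_mulVec, hR2]
  funext i
  fin_cases i <;> simp

/-! ### Existence of an eigenvector -/

lemma re_mul_comm (a b : ℍ) : (a * b).re = (b * a).re := by
  simp [Quaternion.re_mul]; ring

lemma exists_eigenvector (z : M3) (hz : zᴴ = z) :
    ∃ (μ : ℝ) (v : Fin 3 → ℍ), v ≠ 0 ∧ z *ᵥ v = μ • v := by
  let E := PiLp 2 (fun _ : Fin 3 => ℍ)
  let T : E →ₗ[ℝ] E :=
    { toFun := fun v => WithLp.toLp 2 (z *ᵥ v.ofLp : Fin 3 → ℍ)
      map_add' := fun v w => by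
        show WithLp.toLp 2 (z *ᵥ (v.ofLp + w.ofLp)) = _; rw [Matrix.mulVec_add]; rfl
      map_smul' := fun c v => by
        show WithLp.toLp 2 (z *ᵥ (c • v.ofLp)) = _; rw [Matrix.mulVec_smul]; rfl }
  have hkey : ∀ (i j : Fin 3) (a b : ℍ),
      (a * (star b * star (z j i))).re = (z i j * a * star b).re := by
    intro i j a b
    have h1 : star (z j i) = z i j := by
      rw [← Matrix.conjTranspose_apply]; exact congrFun (congrFun hz i) j
    calc (a * (star b * star (z j i))).re
        = ((a * star b) * star (z j i)).re := by rw [mul_assoc]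
      _ = (star (z j i) * (a * star b)).re := re_mul_comm _ _
      _ = (z i j * a * star b).re := by rw [h1, mul_assoc]
  have hTapp : ∀ (v : E) (i : Fin 3), T v i = (z *ᵥ v) i := fun v i => rfl
  have hT : T.IsSymmetric := by
    intro x y
    rw [PiLp.inner_apply, PiLp.inner_apply]
    simp only [Quaternion.inner_def, hTapp, Matrix.mulVec, dotProduct, Fin.sum_univ_three,
      add_mul, mul_add, star_add, StarMul.star_mul, Quaternion.re_add]
    simp only [hkey]
    ring
  have := LinearMap.IsSymmetric.hasEigenvalue_iSup_of_finiteDimensional hT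
  obtain ⟨v, hv⟩ := this.exists_hasEigenvector
  exact ⟨_, v.ofLp, fun h => hv.2 ((WithLp.ofLp_eq_zero 2).mp h), congrArg WithLp.ofLp hv.apply_eq_smul⟩

/-! ### half-angle algebra -/

lemma exists_half {x y : ℝ} (h : x^2 + y^2 = 1) :
    ∃ c s : ℝ, c^2 + s^2 = 1 ∧ c^2 - s^2 = x ∧ 2*(c*s) = y := by
  by_cases hx : x = -1
  · refine ⟨0, 1, by norm_num, by rw [hx]; norm_num, by nlinarith [h]⟩
  · have hx1 : -1 ≤ x := by nlinarith [sq_nonneg y]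
    have h1x : 0 < 1 + x := by
      rcases lt_or_eq_of_le hx1 with h' | h'
      · linarith
      · exact absurd h'.symm hx
    set c := Real.sqrt ((1+x)/2) with hcdef
    have hc2 : c^2 = (1+x)/2 := Real.sq_sqrt (by linarith)
    have hcpos : 0 < c := Real.sqrt_pos.mpr (by linarith)
    refine ⟨c, y/(2*c), ?_, ?_, ?_⟩
    · field_simp
      nlinarith [hc2, h]
    · field_simp
      nlinarith [hc2, h]
    · field_simp

lemma exists_rot (a b r : ℝ) :
    ∃ c s : ℝ, c^2 + s^2 = 1 ∧ r*(c^2 - s^2) + c*s*(b - a) = 0 := by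
  by_cases hP : ((a-b)/2)^2 + r^2 = 0
  · have hr : r = 0 := by nlinarith [sq_nonneg ((a-b)/2), sq_nonneg r]
    exact ⟨1, 0, by norm_num, by rw [hr]; ring⟩
  · set ρ := Real.sqrt (((a-b)/2)^2 + r^2) with hρdef
    have hρpos : 0 < ρ := Real.sqrt_pos.mpr
      (lt_of_le_of_ne (by positivity) (Ne.symm hP))
    have hρ2 : ρ^2 = ((a-b)/2)^2 + r^2 := Real.sq_sqrt (by positivity)
    obtain ⟨c, s, h1, h2, h3⟩ := exists_half (x := ((a-b)/2)/ρ) (y := r/ρ)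
      (by field_simp; nlinarith [hρ2])
    refine ⟨c, s, h1, ?_⟩
    have h2' : c^2 - s^2 = ((a-b)/2)/ρ := h2
    have h3' : c*s = (r/ρ)/2 := by linarith [h3]
    rw [h2', h3']
    field_simp
    ring

lemma ct3 (a b c d e f g h i : ℍ) :
    (!![a,b,c; d,e,f; g,h,i])ᴴ =
      !![star a, star d, star g; star b, star e, star h; star c, star f, star i] := by
  refine Matrix.ext fun p q => ?_
  fin_cases p <;> fin_cases q <;> rfl

lemma mulVec_e0 (w : M3) :
    w *ᵥ (fun j => if j = 0 then 1 else 0) = fun i => w i 0 := by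
  funext i
  simp [Matrix.mulVec, dotProduct, Fin.sum_univ_three]

lemma rot12_map (c s : ℝ) : (rot12 c s).map (algebraMap ℝ (Quaternion ℝ)) =
    !![1,0,0; 0,(c:ℍ),(s:ℍ); 0,-(s:ℍ),(c:ℍ)] := by
  rw [rot12, map3]
  norm_num [algMap_eq]

set_option maxHeartbeats 2000000 in
/-- The key 3×3 computation: conjugating by the rotation/phase matrix
diagonalizes the remaining 2×2 block. -/
lemma final_identity (p q : ℍ) (μ a b r c s : ℝ)
    (hp1 : p * star p = 1)
    (hpq : p * q = ((r : ℝ) : ℍ))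
    (hqp : star q * star p = ((r : ℝ) : ℍ))
    (hcs : c^2 + s^2 = 1)
    (hkill : r*(c^2 - s^2) + c*s*(b - a) = 0) :
    (((rot12 c s).map (algebraMap ℝ (Quaternion ℝ))) * Matrix.diagonal ![1, p, 1]) *
      !![((μ:ℝ):ℍ), 0, 0; 0, ((a:ℝ):ℍ), q; 0, star q, ((b:ℝ):ℍ)] *
      (((rot12 c s).map (algebraMap ℝ (Quaternion ℝ))) * Matrix.diagonal ![1, p, 1])ᴴ =
    Matrix.diagonal (fun i => algebraMap ℝ (Quaternion ℝ)
      (![μ, c^2*a + 2*(c*s)*r + s^2*b, s^2*a - 2*(c*s)*r + c^2*b] i)) := by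
  have hB : ((rot12 c s).map (algebraMap ℝ (Quaternion ℝ))) * Matrix.diagonal ![1, p, 1] =
      !![1,0,0; 0,(c:ℍ)*p,(s:ℍ); 0,-(s:ℍ)*p,(c:ℍ)] := by
    rw [rot12_map, diag3, Matrix.mul_fin_three]
    norm_num
  have hd : (fun i => algebraMap ℝ (Quaternion ℝ)
      (![μ, c^2*a + 2*(c*s)*r + s^2*b, s^2*a - 2*(c*s)*r + c^2*b] i)) =
      ![((μ:ℝ):ℍ), ((c^2*a + 2*(c*s)*r + s^2*b : ℝ):ℍ), ((s^2*a - 2*(c*s)*r + c^2*b : ℝ):ℍ)] := by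
    funext i; fin_cases i <;> rfl
  rw [hd, hB, ct3, Matrix.mul_fin_three, Matrix.mul_fin_three, diag3]
  have hpq' : p * q = r • 1 := by rw [hpq, ← algMap_eq, Algebra.algebraMap_eq_smul_one]
  have hqp' : star q * star p = r • 1 := by rw [hqp, ← algMap_eq, Algebra.algebraMap_eq_smul_one]
  have hco : ∀ x : ℝ, ((x:ℝ):ℍ) = x • 1 := fun x => by
    rw [← algMap_eq, Algebra.algebraMap_eq_smul_one]
  refine Matrix.ext fun i j => ?_
  fin_cases i <;> fin_cases j <;>
    simp [mul_add, add_mul, StarMul.star_mul, star_smul, star_trivial, star_star,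
      Quaternion.star_coe, mul_assoc, Quaternion.coe_mul_eq_smul, Quaternion.mul_coe_eq_smul,
      smul_mul_assoc, mul_smul_comm, smul_smul, hpq', hqp', hp1, hco, smul_smul]
  all_goals match_scalars
  all_goals try ring
  all_goals linear_combination hkill

end QH3

open QH3 in
set_option maxHeartbeats 1000000 in
/-- Any Hermitian 3×3 quaternionic matrix is diagonalized, with real diagonal
entries, by an element of the subgroup generated by the `T_h` and `SO₃(ℝ)`. -/
theorem hermitian_diagonalizable_by_Th_and_SO3
    (z : Matrix (Fin 3) (Fin 3) (Quaternion ℝ)) (hz : zᴴ = z) :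
    ∃ u ∈ Subgroup.closure genSet, ∃ d : Fin 3 → ℝ,
      u.val * z *
        (u.val)ᴴ =
      Matrix.diagonal (fun i => algebraMap ℝ (Quaternion ℝ) (d i)) := by
  classical
  obtain ⟨μ, v, hv0, hev⟩ := exists_eigenvector z hz
  have hvpos : 0 < ‖v 0‖^2 + ‖v 1‖^2 + ‖v 2‖^2 := by
    have h0 : (0:ℝ) ≤ ‖v 0‖^2 := sq_nonneg _
    have h1 : (0:ℝ) ≤ ‖v 1‖^2 := sq_nonneg _
    have h2 : (0:ℝ) ≤ ‖v 2‖^2 := sq_nonneg _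
    have hip : 0 < ‖v 0‖^2 ∨ 0 < ‖v 1‖^2 ∨ 0 < ‖v 2‖^2 := by
      by_contra hc
      push_neg at hc
      have e0 : v 0 = 0 := by
        have := le_antisymm hc.1 h0
        simpa [pow_eq_zero_iff] using this
      have e1 : v 1 = 0 := by
        have := le_antisymm hc.2.1 h1
        simpa [pow_eq_zero_iff] using this
      have e2 : v 2 = 0 := by
        have := le_antisymm hc.2.2 h2
        simpa [pow_eq_zero_iff] using this
      apply hv0
      funext j
      fin_cases j
      · simpa using e0
      · simpa using e1
      · simpa using e2
    rcases hip with h | h | h <;> linarith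
  set n : ℝ := Real.sqrt (‖v 0‖^2 + ‖v 1‖^2 + ‖v 2‖^2) with hn
  have hn2 : n^2 = ‖v 0‖^2 + ‖v 1‖^2 + ‖v 2‖^2 := Real.sq_sqrt (le_of_lt hvpos)
  have hnpos : 0 < n := Real.sqrt_pos.mpr hvpos
  set v' : Fin 3 → Quaternion ℝ := n⁻¹ • v with hv'
  have hv'norm : ‖v' 0‖^2 + ‖v' 1‖^2 + ‖v' 2‖^2 = 1 := by
    have : ∀ i : Fin 3, ‖v' i‖^2 = (n⁻¹)^2 * ‖v i‖^2 := by
      intro i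
      rw [hv', Pi.smul_apply, norm_smul, Real.norm_eq_abs,
        abs_of_pos (inv_pos.mpr hnpos), mul_pow]
    rw [this 0, this 1, this 2]
    have hne : n ≠ 0 := ne_of_gt hnpos
    field_simp
    linarith [hn2]
  have hev' : z *ᵥ v' = μ • v' := by
    rw [hv', Matrix.mulVec_smul, hev, smul_comm]
  obtain ⟨A, hAmem, hA⟩ := exists_mapsTo_e0 v' hv'norm
  obtain ⟨u1, hu1, hu1v⟩ := hAmem
  have hu1U := isUnitary_of_mem hu1
  rw [hu1v] at hu1U
  set w := A * z * Aᴴ with hw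
  have hwH : wᴴ = w := by
    rw [hw, Matrix.conjTranspose_mul, Matrix.conjTranspose_mul,
      Matrix.conjTranspose_conjTranspose, hz, mul_assoc]
  have hAv : Aᴴ *ᵥ (fun j => if j = 0 then (1 : Quaternion ℝ) else 0) = v' := by
    rw [← hA, Matrix.mulVec_mulVec, hu1U.2, Matrix.one_mulVec]
  have hcole : w *ᵥ (fun j => if j = 0 then (1 : Quaternion ℝ) else 0) =
      μ • (fun j => if j = 0 then (1 : Quaternion ℝ) else 0) := by
    rw [hw, ← Matrix.mulVec_mulVec, ← Matrix.mulVec_mulVec, hAv, hev',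
      Matrix.mulVec_smul, hA]
  have hcol : ∀ i, w i 0 = if i = 0 then ((μ : ℝ) : Quaternion ℝ) else 0 := by
    intro i
    have h1 := congrFun hcole i
    have h2 := congrFun (mulVec_e0 w) i
    rw [h2] at h1
    rw [h1]
    by_cases hi : i = 0
    · simp [hi, ← algMap_eq, Algebra.algebraMap_eq_smul_one]
    · simp [hi]
  set q := w 1 2 with hq
  set p := phase q with hp
  have hp1 : p * star p = 1 := mul_star_self_of_norm_one (norm_phase q)
  have hpq : p * q = ((‖q‖ : ℝ) : Quaternion ℝ) := phase_mul q
  have hqp : star q * star p = ((‖q‖ : ℝ) : Quaternion ℝ) := by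
    have h1 := congrArg star hpq
    rw [StarMul.star_mul, Quaternion.star_coe] at h1
    exact h1
  set a : ℝ := (w 1 1).re with ha
  set b : ℝ := (w 2 2).re with hb
  obtain ⟨c, s, hcs, hkill⟩ := exists_rot a b ‖q‖
  have hsym : ∀ i j, w i j = star (w j i) := by
    intro i j
    rw [← Matrix.conjTranspose_apply, hwH]
  have hw00 : w 0 0 = ((μ : ℝ) : Quaternion ℝ) := by simpa using hcol 0
  have hw10 : w 1 0 = 0 := by simpa using hcol 1
  have hw20 : w 2 0 = 0 := by simpa using hcol 2
  have hw01 : w 0 1 = 0 := by rw [hsym 0 1, hw10, star_zero]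
  have hw02 : w 0 2 = 0 := by rw [hsym 0 2, hw20, star_zero]
  have hw21 : w 2 1 = star q := by rw [hsym 2 1, ← hq]
  have hw11 : w 1 1 = ((a : ℝ) : Quaternion ℝ) := Quaternion.star_eq_self.mp (hsym 1 1).symm
  have hw22 : w 2 2 = ((b : ℝ) : Quaternion ℝ) := Quaternion.star_eq_self.mp (hsym 2 2).symm
  have hwexp : w = !![((μ:ℝ) : Quaternion ℝ), 0, 0;
      0, ((a:ℝ) : Quaternion ℝ), q; 0, star q, ((b:ℝ) : Quaternion ℝ)] := by
    refine Matrix.ext fun i j => ?_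
    fin_cases i <;> fin_cases j <;>
      simp [hw00, hw01, hw02, hw10, hw20, hw21, hw11, hw22, ← hq,
        Matrix.vecHead, Matrix.vecTail]
  have hBmem : ((rot12 c s).map (algebraMap ℝ (Quaternion ℝ)) *
      Matrix.diagonal ![1, p, 1]) ∈ clSet :=
    clSet.mul (mem_rot12 hcs) (mem_diag norm_one (norm_phase q) norm_one)
  obtain ⟨u, humem, huval⟩ := clSet.mul hBmem ⟨u1, hu1, hu1v⟩
  refine ⟨u, humem,
    ![μ, c^2*a + 2*(c*s)*‖q‖ + s^2*b, s^2*a - 2*(c*s)*‖q‖ + c^2*b], ?_⟩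
  rw [huval, Matrix.conjTranspose_mul]
  have hassoc : (rot12 c s).map (algebraMap ℝ (Quaternion ℝ)) *
        Matrix.diagonal ![1, p, 1] * A * z *
        (Aᴴ * ((rot12 c s).map (algebraMap ℝ (Quaternion ℝ)) *
          Matrix.diagonal ![1, p, 1])ᴴ) =
      ((rot12 c s).map (algebraMap ℝ (Quaternion ℝ)) * Matrix.diagonal ![1, p, 1]) *
        (A * z * Aᴴ) *
        ((rot12 c s).map (algebraMap ℝ (Quaternion ℝ)) * Matrix.diagonal ![1, p, 1])ᴴ := by
    simp only [mul_assoc]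
  rw [hassoc, ← hw, hwexp]
  exact final_identity p q μ a b ‖q‖ c s hp1 hpq hqp hcs hkill

end
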